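/- For a simple symmetric random walk S on the integers with S(0)=0, and any integers n ≥ 1 and k with 1 ≤ k ≤ n, the probability that S(1)>0, S(2)>0, ..., S(2n-1)>0 and S(2n)=2k equals (k/n)·(1/2^{2n})·C(2n, n+k). -/

import Mathlib

open MeasureTheory ProbabilityTheory ENNReal


namespace BallotAux

def val (b : Bool) : ℤ := if b then 1 else -1

def valAt {m : ℕ} (ε : Fin m → Bool) (j : ℕ) : ℤ :=
  if h : j < m then val (ε ⟨j, h⟩) else 0

def psum {m : ℕ} (ε : Fin m → Bool) (i : ℕ) : ℤ := ∑ j ∈ Finset.range i, valAt ε j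

def cond (m : ℕ) (j : ℤ) (ε : Fin m → Bool) : Prop :=
  (∀ i ∈ Finset.Icc 1 m, 0 < psum ε i) ∧ psum ε m = j

instance (m j) : DecidablePred (cond m j) := fun _ => by unfold cond; infer_instance

def cnt (m : ℕ) (j : ℤ) : ℕ := (Finset.univ.filter (cond m j)).card

lemma valAt_le {m : ℕ} (ε : Fin m → Bool) (j : ℕ) : valAt ε j ≤ 1 := by
  unfold valAt val; split <;> try split
  all_goals norm_num

lemma psum_le {m : ℕ} (ε : Fin m → Bool) (i : ℕ) : psum ε i ≤ i := by
  calc psum ε i ≤ ∑ _j ∈ Finset.range i, (1:ℤ) := Finset.sum_le_sum fun j _ => valAt_le ε j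
  _ = i := by simp

lemma cnt_eq_zero_of_lt {m : ℕ} {j : ℤ} (h : (m:ℤ) < j) : cnt m j = 0 := by
  rw [cnt, Finset.card_eq_zero, Finset.filter_eq_empty_iff]
  rintro ε - ⟨-, h2⟩
  exact absurd (h2 ▸ psum_le ε m) (not_le.mpr h)

lemma cnt_zero {m : ℕ} (hm : 1 ≤ m) : cnt m 0 = 0 := by
  rw [cnt, Finset.card_eq_zero, Finset.filter_eq_empty_iff]
  rintro ε - ⟨h1, h2⟩
  have := h1 m (Finset.mem_Icc.mpr ⟨hm, le_rfl⟩)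
  omega

lemma valAt_snoc {m : ℕ} (ε : Fin m → Bool) (b : Bool) {j : ℕ} (h : j < m) :
    valAt (Fin.snoc ε b) j = valAt ε j := by
  rw [valAt, valAt, dif_pos h, dif_pos (Nat.lt_succ_of_lt h)]
  have he : (⟨j, Nat.lt_succ_of_lt h⟩ : Fin (m+1)) = Fin.castSucc ⟨j, h⟩ := rfl
  rw [he, Fin.snoc_castSucc]

lemma psum_snoc {m : ℕ} (ε : Fin m → Bool) (b : Bool) {i : ℕ} (h : i ≤ m) :
    psum (Fin.snoc ε b) i = psum ε i := by
  unfold psum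
  exact Finset.sum_congr rfl fun j hj =>
    valAt_snoc ε b (lt_of_lt_of_le (Finset.mem_range.mp hj) h)

lemma psum_snoc_last {m : ℕ} (ε : Fin m → Bool) (b : Bool) :
    psum (Fin.snoc ε b) (m+1) = psum ε m + val b := by
  rw [psum, Finset.sum_range_succ, ← psum, psum_snoc ε b le_rfl]
  congr 1
  rw [valAt, dif_pos (Nat.lt_succ_self m)]
  have he : (⟨m, Nat.lt_succ_self m⟩ : Fin (m+1)) = Fin.last m := rfl
  rw [he, Fin.snoc_last]

lemma cond_snoc {m : ℕ} {j : ℤ} (hj : 0 < j) (ε : Fin m → Bool) (b : Bool) :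
    cond (m+1) j (Fin.snoc ε b) ↔ cond m (j - val b) ε := by
  constructor
  · rintro ⟨h1, h2⟩
    rw [psum_snoc_last] at h2
    refine ⟨fun i hi => ?_, by omega⟩
    have hi' := Finset.mem_Icc.mp hi
    have := h1 i (Finset.mem_Icc.mpr ⟨hi'.1, by omega⟩)
    rwa [psum_snoc ε b hi'.2] at this
  · rintro ⟨h1, h2⟩
    refine ⟨fun i hi => ?_, by rw [psum_snoc_last]; omega⟩
    have hi' := Finset.mem_Icc.mp hi
    rcases Nat.lt_succ_iff_lt_or_eq.mp (Nat.lt_succ_of_le hi'.2) with h | h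
    · rw [psum_snoc ε b (by omega)]
      exact h1 i (Finset.mem_Icc.mpr ⟨hi'.1, by omega⟩)
    · subst h; rw [psum_snoc_last]; omega

lemma snoc_inj {m : ℕ} (b : Bool) :
    Function.Injective (fun ε : Fin m → Bool => (Fin.snoc ε b : Fin (m+1) → Bool)) := by
  intro a a' h
  have := congrArg Fin.init h
  simpa [Fin.init_snoc] using this

lemma cnt_succ (m : ℕ) {j : ℤ} (hj : 0 < j) :
    cnt (m+1) j = cnt m (j-1) + cnt m (j+1) := by
  classical
  have key : (Finset.univ.filter (cond (m+1) j)) =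
      ((Finset.univ.filter (cond m (j-1))).image (fun ε => (Fin.snoc ε true : Fin (m+1) → Bool))) ∪
      ((Finset.univ.filter (cond m (j+1))).image (fun ε => (Fin.snoc ε false : Fin (m+1) → Bool))) := by
    ext ε'
    simp only [Finset.mem_filter, Finset.mem_union, Finset.mem_image, Finset.mem_univ, true_and]
    constructor
    · intro h
      have hsn : Fin.snoc (Fin.init ε') (ε' (Fin.last m)) = ε' := Fin.snoc_init_self ε'
      rcases Bool.eq_false_or_eq_true (ε' (Fin.last m)) with hb | hb
      · left; refine ⟨Fin.init ε', ?_, by rw [← hb, hsn]⟩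
        rw [← hsn, hb] at h
        have := (cond_snoc hj _ _).mp h
        simpa [val] using this
      · right; refine ⟨Fin.init ε', ?_, by rw [← hb, hsn]⟩
        rw [← hsn, hb] at h
        have := (cond_snoc hj _ _).mp h
        simpa [val] using this
    · rintro (⟨ε, hc, rfl⟩ | ⟨ε, hc, rfl⟩)
      · exact (cond_snoc hj _ _).mpr (by simpa [val] using hc)
      · exact (cond_snoc hj _ _).mpr (by simpa [val] using hc)
  have hdisj : Disjoint ((Finset.univ.filter (cond m (j-1))).image
        (fun ε => (Fin.snoc ε true : Fin (m+1) → Bool)))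
      ((Finset.univ.filter (cond m (j+1))).image (fun ε => (Fin.snoc ε false : Fin (m+1) → Bool))) := by
    rw [Finset.disjoint_left]
    rintro ε' h1 h2
    obtain ⟨a, -, rfl⟩ := Finset.mem_image.mp h1
    obtain ⟨b, -, hb⟩ := Finset.mem_image.mp h2
    have := congrFun hb (Fin.last m)
    simp [Fin.snoc_last] at this
  rw [cnt, key, Finset.card_union_of_disjoint hdisj,
    Finset.card_image_of_injective _ (snoc_inj true),
    Finset.card_image_of_injective _ (snoc_inj false), cnt, cnt]

lemma cnt_one : cnt 1 1 = 1 := by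
  rw [cnt, Finset.card_eq_one]
  refine ⟨fun _ => true, ?_⟩
  ext ε
  simp only [Finset.mem_filter, Finset.mem_univ, true_and, Finset.mem_singleton]
  have hps : ∀ ε : Fin 1 → Bool, psum ε 1 = val (ε 0) := by
    intro ε; rw [psum, Finset.sum_range_one, valAt, dif_pos Nat.one_pos, Fin.mk_zero]
  constructor
  · rintro ⟨-, h2⟩
    rw [hps] at h2
    funext i
    have : ε 0 = true := by
      rcases Bool.eq_false_or_eq_true (ε 0) with hb | hb <;> simp [hb, val] at h2 ⊢
    rw [Fin.fin_one_eq_zero i, this]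
  · rintro rfl
    refine ⟨?_, by rw [hps]; rfl⟩
    intro i hi
    have : i = 1 := by simp [Finset.mem_Icc] at hi; omega
    subst this
    rw [hps]; norm_num [val]

lemma cnt_formula : ∀ m p q : ℕ, p + q = m → q < p →
    cnt m ((p:ℤ) - q) * m = (p - q) * m.choose p := by
  intro m
  induction m with
  | zero => intro p q h hq; omega
  | succ m ih =>
    intro p q hpq hq
    rcases Nat.eq_zero_or_pos m with hm | hm
    · have hp : p = 1 := by omega
      have hq0 : q = 0 := by omega
      subst hp; subst hq0; subst hm
      simpa using cnt_one
    have hj : (0:ℤ) < (p:ℤ) - q := by omega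
    have hp1 : 1 ≤ p := by omega
    set a := m.choose (p-1) with ha
    set b := m.choose p with hb
    have F1 : (cnt m ((p:ℤ) - q - 1) : ℤ) * m = ((p:ℤ) - 1 - q) * a := by
      rcases Nat.lt_or_ge q (p-1) with h | h
      · have H := ih (p-1) q (by omega) h
        have hc1 : (((p-1:ℕ)):ℤ) - ((q:ℕ):ℤ) = (p:ℤ) - q - 1 := by omega
        have hc2 : ((p - 1 - q : ℕ) : ℤ) = (p:ℤ) - 1 - q := by omega
        rw [← hc1, ← hc2]
        exact_mod_cast H
      · have h0 : (p:ℤ) - q - 1 = 0 := by omega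
        have h1 : (p:ℤ) - 1 - q = 0 := by omega
        rw [h0, h1, cnt_zero hm]
        simp
    have F2 : (cnt m ((p:ℤ) - q + 1) : ℤ) * m = ((p:ℤ) + 1 - q) * b := by
      rcases Nat.eq_zero_or_pos q with h | h
      · subst h
        rw [cnt_eq_zero_of_lt (by omega : (m:ℤ) < (p:ℤ) - (0:ℕ) + 1)]
        have hb0 : b = 0 := Nat.choose_eq_zero_of_lt (by omega)
        rw [hb0]
        simp
      · have H := ih p (q-1) (by omega) (by omega)
        have hc1 : ((p:ℕ):ℤ) - (((q-1:ℕ)):ℤ) = (p:ℤ) - q + 1 := by omega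
        have hc2 : ((p - (q - 1) : ℕ) : ℤ) = (p:ℤ) + 1 - q := by omega
        rw [← hc1, ← hc2]
        exact_mod_cast H
    have hrel : (b:ℤ) * p = (a:ℤ) * q := by
      have h1 := Nat.choose_succ_right_eq m (p-1)
      have h2 : p - 1 + 1 = p := by omega
      have h3 : m - (p - 1) = q := by omega
      rw [h2, h3] at h1
      exact_mod_cast h1
    have hpascal : (((m+1).choose p : ℕ) : ℤ) = a + b := by
      obtain ⟨p', rfl⟩ : ∃ p', p = p' + 1 := ⟨p - 1, by omega⟩
      have h4 : p' + 1 - 1 = p' := rfl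
      rw [ha, hb, h4]
      exact_mod_cast Nat.choose_succ_succ m p'
    have key : ((cnt m ((p:ℤ)-q-1) : ℤ) + cnt m ((p:ℤ)-q+1)) * ((m:ℤ)+1) * m
        = ((p:ℤ) - q) * (((m+1).choose p : ℕ) : ℤ) * m := by
      have hpq' : (p:ℤ) + q = (m:ℤ) + 1 := by omega
      rw [hpascal]
      linear_combination ((m:ℤ)+1) * F1 + ((m:ℤ)+1) * F2 + 2 * hrel + ((a:ℤ) - b) * hpq'
    have keyN : (cnt m ((p:ℤ)-q-1) + cnt m ((p:ℤ)-q+1)) * (m+1) * m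
        = (p - q) * ((m+1).choose p) * m := by
      zify [hq.le]
      linear_combination key
    rw [cnt_succ m hj]
    exact Nat.eq_of_mul_eq_mul_right hm keyN

lemma val_injective : Function.Injective val := by
  intro b b' h
  cases b <;> cases b' <;> simp [val] at h ⊢

end BallotAux

open BallotAux

/-- Ballot-type formula: for a simple symmetric random walk, the probability that the
walk stays strictly positive up to time `2n-1` and ends at `2k` at time `2n` equals
`(k/n) · 2^{-2n} · C(2n, n+k)`. -/
theorem ballot_positive_excursion
    {Ω : Type*} [MeasurableSpace Ω] (μ : Measure Ω) [IsProbabilityMeasure μ]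
    (X : ℕ → Ω → ℤ)
    (hmeas : ∀ i, Measurable (X i))
    (hindep : iIndepFun X μ)
    (h1 : ∀ i, μ {ω | X i ω = 1} = 1/2)
    (h2 : ∀ i, μ {ω | X i ω = -1} = 1/2)
    (S : ℕ → Ω → ℤ) (hS : ∀ n ω, S n ω = ∑ i ∈ Finset.range n, X i ω)
    (n k : ℕ) (hn : 1 ≤ n) (hk : 1 ≤ k) (hkn : k ≤ n) :
    μ {ω | (∀ i, 1 ≤ i → i ≤ 2*n - 1 → 0 < S i ω) ∧ S (2*n) ω = 2*k}
      = (k : ℝ≥0∞) / (n : ℝ≥0∞) * ((2*n).choose (n+k) : ℝ≥0∞) / 2^(2*n) := by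
  set m := 2*n with hm
  have hm2 : 2 ≤ m := by omega
  set j : ℤ := 2*(k:ℤ) with hjdef
  set E : Set Ω := {ω | (∀ i, 1 ≤ i → i ≤ m - 1 → 0 < S i ω) ∧ S m ω = 2*k} with hE
  set Cyl : (Fin m → Bool) → Set Ω :=
    (fun ε => {ω | ∀ i : Fin m, X i ω = val (ε i)}) with hCylDef
  have hCylMeas : ∀ ε, MeasurableSet (Cyl ε) := by
    intro ε
    have hrw : Cyl ε = ⋂ i : Fin m, (X i) ⁻¹' {val (ε i)} := by
      ext ω; simp [hCylDef, Set.mem_iInter]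
    rw [hrw]
    exact MeasurableSet.iInter fun i => (hmeas i) (measurableSet_singleton _)
  have hCyl : ∀ ε, μ (Cyl ε) = (1/2 : ℝ≥0∞) ^ m := by
    intro ε
    have hset : Cyl ε = ⋂ i ∈ Finset.range m, (X i) ⁻¹' {valAt ε i} := by
      ext ω
      simp only [hCylDef, Set.mem_setOf_eq, Set.mem_iInter, Set.mem_preimage,
        Set.mem_singleton_iff, Finset.mem_range]
      constructor
      · intro h i hi
        rw [valAt, dif_pos hi]
        exact h ⟨i, hi⟩
      · intro h i
        have := h i.val i.isLt
        rwa [valAt, dif_pos i.isLt, Fin.eta] at this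
    rw [hset, hindep.measure_inter_preimage_eq_mul (Finset.range m)
      (sets := fun i => {valAt ε i}) (fun i _ => measurableSet_singleton _)]
    have hfac : ∀ i ∈ Finset.range m, μ (X i ⁻¹' {valAt ε i}) = 1/2 := by
      intro i hi
      rw [valAt, dif_pos (Finset.mem_range.mp hi)]
      cases hb : ε ⟨i, Finset.mem_range.mp hi⟩
      · have : X i ⁻¹' {val false} = {ω | X i ω = -1} := by
          ext ω; simp [val]
        rw [this, h2]
      · have : X i ⁻¹' {val true} = {ω | X i ω = 1} := by
          ext ω; simp [val]
        rw [this, h1]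
    rw [Finset.prod_congr rfl hfac, Finset.prod_const, Finset.card_range]
  have hSpsum : ∀ (ω : Ω) (ε : Fin m → Bool), (∀ i : Fin m, X i ω = val (ε i)) →
      ∀ i, i ≤ m → S i ω = psum ε i := by
    intro ω ε hω i him
    rw [hS, psum]
    refine Finset.sum_congr rfl fun r hr => ?_
    have hrm : r < m := lt_of_lt_of_le (Finset.mem_range.mp hr) him
    rw [valAt, dif_pos hrm]
    exact hω ⟨r, hrm⟩
  set Good : Finset (Fin m → Bool) := Finset.univ.filter (cond m j) with hGood
  set N : Set Ω := ⋃ i ∈ Finset.range m, {ω | X i ω ≠ 1 ∧ X i ω ≠ -1} with hNdef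
  have hsub1 : (⋃ ε ∈ Good, Cyl ε) ⊆ E := by
    rintro ω hω
    simp only [Set.mem_iUnion, exists_prop] at hω
    obtain ⟨ε, hεG, hωε⟩ := hω
    obtain ⟨hc1, hc2⟩ := (Finset.mem_filter.mp hεG).2
    have hps := hSpsum ω ε hωε
    constructor
    · intro i hi1 hi2
      rw [hps i (by omega)]
      exact hc1 i (Finset.mem_Icc.mpr ⟨hi1, by omega⟩)
    · rw [hps m le_rfl, hc2]
  have hsub2 : E ⊆ (⋃ ε ∈ Good, Cyl ε) ∪ N := by
    intro ω hωE
    by_cases hωN : ω ∈ N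
    · exact Or.inr hωN
    · left
      simp only [hNdef, Set.mem_iUnion, exists_prop, Finset.mem_range, Set.mem_setOf_eq,
        not_exists, not_and, Decidable.not_not] at hωN
      have hval : ∀ i : ℕ, i < m → X i ω = 1 ∨ X i ω = -1 := by
        intro i hi
        by_cases h : X i ω = 1
        · exact Or.inl h
        · exact Or.inr (hωN i hi h)
      set ε : Fin m → Bool := fun i => decide (X i.val ω = 1) with hεdef
      have hωε : ∀ i : Fin m, X i ω = val (ε i) := by
        intro i
        rcases hval i.val i.isLt with h | h
        · simp [hεdef, h, val]
        · have h1' : X i.val ω ≠ 1 := by rw [h]; decide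
          simp [hεdef, h, h1', val]
      have hps := hSpsum ω ε hωε
      obtain ⟨hE1, hE2⟩ := hωE
      have hcond : cond m j ε := by
        constructor
        · intro i hi
          obtain ⟨hi1, hi2⟩ := Finset.mem_Icc.mp hi
          rcases Nat.lt_or_ge i m with h | h
          · rw [← hps i (by omega)]
            exact hE1 i hi1 (by omega)
          · have him : i = m := by omega
            rw [him, ← hps m le_rfl, hE2]
            omega
        · rw [← hps m le_rfl, hE2]
      simp only [Set.mem_iUnion, exists_prop]
      exact ⟨ε, Finset.mem_filter.mpr ⟨Finset.mem_univ _, hcond⟩, hωε⟩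
  have hN : μ N = 0 := by
    have h0 : ∀ i, μ {ω | X i ω ≠ 1 ∧ X i ω ≠ -1} = 0 := by
      intro i
      have hmeas1 : MeasurableSet {ω | X i ω = 1} := (hmeas i) (measurableSet_singleton 1)
      have hmeas2 : MeasurableSet {ω | X i ω = -1} := (hmeas i) (measurableSet_singleton (-1))
      have hd : Disjoint {ω | X i ω = 1} {ω | X i ω = -1} := by
        rw [Set.disjoint_left]
        rintro ω hω1 hω2
        simp only [Set.mem_setOf_eq] at hω1 hω2
        omega
      have hu : μ ({ω | X i ω = 1} ∪ {ω | X i ω = -1}) = 1 := by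
        rw [measure_union hd hmeas2, h1, h2]
        rw [ENNReal.add_halves]
      have hc : {ω | X i ω ≠ 1 ∧ X i ω ≠ -1} = ({ω | X i ω = 1} ∪ {ω | X i ω = -1})ᶜ := by
        ext ω; simp [not_or]
      rw [hc, prob_compl_eq_zero_iff (hmeas1.union hmeas2)]
      exact hu
    refine le_antisymm ?_ zero_le
    calc μ N ≤ ∑ i ∈ Finset.range m, μ {ω | X i ω ≠ 1 ∧ X i ω ≠ -1} :=
          measure_biUnion_finset_le _ _
    _ = 0 := by simp [h0]
  have hEq : μ E = μ (⋃ ε ∈ Good, Cyl ε) := by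
    refine le_antisymm ?_ (measure_mono hsub1)
    calc μ E ≤ μ ((⋃ ε ∈ Good, Cyl ε) ∪ N) := measure_mono hsub2
    _ ≤ μ (⋃ ε ∈ Good, Cyl ε) + μ N := measure_union_le _ _
    _ = μ (⋃ ε ∈ Good, Cyl ε) := by rw [hN, add_zero]
  have hpd : (↑Good : Set (Fin m → Bool)).PairwiseDisjoint Cyl := by
    intro ε _ ε' _ hne
    rw [Function.onFun, Set.disjoint_left]
    intro ω hω hω'
    refine hne (funext fun i => val_injective ?_)
    rw [← hω i, ← hω' i]
  have hcnt : Good.card = cnt m j := rfl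
  have hformula := cnt_formula m (n+k) (n-k) (by omega) (by omega)
  have hjcast : ((n+k:ℕ):ℤ) - ((n-k:ℕ):ℤ) = j := by rw [hjdef]; omega
  rw [hjcast] at hformula
  have h2k : (n+k) - (n-k) = 2*k := by omega
  rw [h2k] at hformula
  have hcn : cnt m j * n = k * (m.choose (n+k)) := by
    refine Nat.eq_of_mul_eq_mul_left (show 0 < 2 by norm_num) ?_
    calc 2 * (cnt m j * n) = cnt m j * (2*n) := by ring
    _ = cnt m j * m := by rw [hm]
    _ = 2*k * (m.choose (n+k)) := hformula
    _ = 2 * (k * (m.choose (n+k))) := by ring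
  have hENN : (cnt m j : ℝ≥0∞) = (k : ℝ≥0∞) * (m.choose (n+k) : ℝ≥0∞) / (n : ℝ≥0∞) := by
    rw [ENNReal.eq_div_iff (by exact_mod_cast Nat.cast_ne_zero.mpr (by omega) : (n:ℝ≥0∞) ≠ 0)
      (ENNReal.natCast_ne_top n)]
    rw [mul_comm]
    exact_mod_cast congrArg (Nat.cast : ℕ → ℝ≥0∞) hcn
  rw [hEq, measure_biUnion_finset hpd (fun ε _ => hCylMeas ε)]
  rw [Finset.sum_congr rfl (fun ε _ => hCyl ε), Finset.sum_const, hcnt, nsmul_eq_mul, hENN]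
  simp only [div_eq_mul_inv, one_div, mul_one, ENNReal.inv_pow]
  ring
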